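/- Let G be a finite connected graph and suppose there exists an injective map u from the set of uncontrolled edges into the interior vertices of G assigning to each uncontrolled edge one of its incident vertices, and suppose the uncontrolled edge set contains no cycle. Then there is no path of uncontrolled edges connecting two distinct exterior vertices of G. -/
import Mathlib


/-- A finite graph (multigraph): finitely many edges, each with two (possibly equal)
endpoint vertices. Loops and parallel edges are allowed. -/
structure MultiGraph where
  V : Type
  E : Type
  [fintV : Fintype V]
  [fintE : Fintype E]
  [decV : DecidableEq V]
  ends : E → V × V

attribute [instance] MultiGraph.fintV MultiGraph.fintE MultiGraph.decV

namespace MultiGraph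

variable (G : MultiGraph)

/-- An edge is incident to a vertex if the vertex is one of its endpoints. -/
def Incident (e : G.E) (v : G.V) : Prop :=
  (G.ends e).1 = v ∨ (G.ends e).2 = v

/-- The degree of a vertex (a loop counts twice). -/
def degree (v : G.V) : ℕ :=
  ∑ e : G.E, ((if (G.ends e).1 = v then 1 else 0) + (if (G.ends e).2 = v then 1 else 0))

/-- A vertex is exterior when it is attached to the graph by exactly one edge end. -/
def Exterior (v : G.V) : Prop := G.degree v = 1

/-- A vertex is interior when at least two edge ends are attached to it. -/
def Interior (v : G.V) : Prop := 2 ≤ G.degree v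

/-- A walk along the edges of the graph: a sequence of n edges together with the
n+1 vertices visited, each edge joining two consecutive vertices. -/
structure Walk (G : MultiGraph) where
  n : ℕ
  vert : Fin (n + 1) → G.V
  edge : Fin n → G.E
  compat : ∀ i : Fin n,
    G.ends (edge i) = (vert i.castSucc, vert i.succ) ∨
    G.ends (edge i) = (vert i.succ, vert i.castSucc)

namespace Walk

variable {G}

/-- Starting vertex of a walk. -/
def start (w : Walk G) : G.V := w.vert 0

/-- Final vertex of a walk. -/
def finish (w : Walk G) : G.V := w.vert (Fin.last w.n)

/-- A walk meets a set of edges if it traverses one of them. -/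
def Meets (w : Walk G) (S : Set G.E) : Prop := ∃ i, w.edge i ∈ S

/-- All edges of the walk belong to the set `S`. -/
def EdgesIn (w : Walk G) (S : Set G.E) : Prop := ∀ i, w.edge i ∈ S

/-- A cycle: a closed walk of positive length traversing pairwise distinct edges. -/
def IsCycle (w : Walk G) : Prop :=
  1 ≤ w.n ∧ w.start = w.finish ∧ Function.Injective w.edge

end Walk

/-- The graph is connected: any two vertices are joined by a walk. -/
def Connected : Prop := ∀ v v' : G.V, ∃ w : Walk G, w.start = v ∧ w.finish = v'

end MultiGraph

open MultiGraph

/-- If the uncontrolled edges contain no cycle and there is an injective assignment of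
each uncontrolled edge to one of its incident interior vertices (the ABP condition),
then no path of uncontrolled edges connects two distinct exterior vertices of `G`. -/
theorem abp_implies_no_exterior_path (G : MultiGraph) (hconn : G.Connected)
    (Eω : Set G.E)
    (hforest : ∀ w : Walk G, w.EdgesIn Eωᶜ → ¬ w.IsCycle)
    (u : {e : G.E // e ∉ Eω} → {v : G.V // G.Interior v})
    (hinj : Function.Injective u) (hinc : ∀ e, G.Incident e.1 (u e).1) :
    ¬ ∃ w : Walk G, w.EdgesIn Eωᶜ ∧ Function.Injective w.edge ∧
      G.Exterior w.start ∧ G.Exterior w.finish ∧ w.start ≠ w.finish := by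
  rintro ⟨w, hedges, hedgeinj, hs, hf, hne⟩
  classical
  -- n ≥ 1
  have hn1 : 1 ≤ w.n := by
    rcases Nat.eq_zero_or_pos w.n with h0 | h
    · exfalso
      apply hne
      have hlast : Fin.last w.n = (0 : Fin (w.n + 1)) := by
        ext; simp [h0]
      simp only [Walk.start, Walk.finish, hlast]
    · exact h
  -- map each edge of the walk to its assigned interior vertex
  set f : Fin w.n → G.V := fun i => (u ⟨w.edge i, hedges i⟩).1 with hfdef
  have hfinj : Function.Injective f := by
    intro i j hij
    have := hinj (Subtype.ext hij)
    exact hedgeinj (congrArg Subtype.val this)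
  -- values of f lie among the walk's vertices, excluding start and finish
  set S : Finset G.V :=
    (Finset.univ.image w.vert) \ {w.start, w.finish} with hSdef
  have hfS : ∀ i, f i ∈ S := by
    intro i
    have hint : G.Interior (f i) := (u ⟨w.edge i, hedges i⟩).2
    have hinc' := hinc ⟨w.edge i, hedges i⟩
    have hmem : f i ∈ Finset.univ.image w.vert := by
      rcases w.compat i with hc | hc <;>
        rcases hinc' with h1 | h1 <;>
        · rw [hc] at h1
          simp only [Finset.mem_image, Finset.mem_univ]
          exact ⟨_, trivial, h1⟩
    have hns : f i ≠ w.start := by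
      intro h; rw [h] at hint
      exact absurd hs (by unfold MultiGraph.Exterior; unfold MultiGraph.Interior at hint; omega)
    have hnf : f i ≠ w.finish := by
      intro h; rw [h] at hint
      exact absurd hf (by unfold MultiGraph.Exterior; unfold MultiGraph.Interior at hint; omega)
    simp [hSdef, hmem, hns, hnf]
  -- counting
  have hcard1 : w.n ≤ S.card := by
    have := Finset.card_le_card_of_injOn (s := (Finset.univ : Finset (Fin w.n)))
      f (fun i _ => hfS i) (fun i _ j _ h => hfinj h)
    simpa using this
  have hsub : ({w.start, w.finish} : Finset G.V) ⊆ Finset.univ.image w.vert := by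
    intro v hv
    simp only [Finset.mem_insert, Finset.mem_singleton] at hv
    rcases hv with rfl | rfl <;>
      simp only [Finset.mem_image, Finset.mem_univ] <;>
      exact ⟨_, trivial, rfl⟩
  have hcard2 : S.card = (Finset.univ.image w.vert).card - 2 := by
    rw [hSdef, Finset.card_sdiff_of_subset hsub, Finset.card_insert_of_notMem (by simpa using hne),
      Finset.card_singleton]
  have hcard3 : (Finset.univ.image w.vert).card ≤ w.n + 1 := by
    calc (Finset.univ.image w.vert).card ≤ (Finset.univ : Finset (Fin (w.n+1))).card :=
          Finset.card_image_le
      _ = w.n + 1 := by simp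
  omega
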